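/- For every n ≥ 1 and every integer k with 0 ≤ k ≤ n-1, the differentiated Laguerre kernel satisfies K_{n-1}^{(k,0)}(0,0) = (-1)^k Γ(α+n+1) / ((n-(k+1))! Γ(α+k+2)). -/

import Mathlib

open Polynomial Filter Finset MeasureTheory

namespace LagAux

noncomputable def II (α : ℝ) (P : Polynomial ℝ) : ℝ :=
  ∫ x in Set.Ioi (0:ℝ), P.eval x * (x ^ α * Real.exp (-x))

variable {α : ℝ}

lemma integrable_pow (hα : -1 < α) (j : ℕ) :
    IntegrableOn (fun x : ℝ => x ^ j * (x ^ α * Real.exp (-x))) (Set.Ioi 0) := by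
  have hj : (0:ℝ) ≤ (j:ℝ) := Nat.cast_nonneg j
  have h : (0:ℝ) < (j:ℝ) + α + 1 := by linarith
  refine (Real.GammaIntegral_convergent h).congr_fun ?_ measurableSet_Ioi
  intro x hx
  have hx0 : (0:ℝ) < x := hx
  have : ((j:ℝ) + α + 1 - 1) = (j:ℝ) + α := by ring
  simp only [this]
  rw [Real.rpow_add hx0, Real.rpow_natCast]
  ring

lemma integrable_poly (hα : -1 < α) (P : Polynomial ℝ) :
    IntegrableOn (fun x : ℝ => P.eval x * (x ^ α * Real.exp (-x))) (Set.Ioi 0) := by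
  have e : (fun x : ℝ => P.eval x * (x ^ α * Real.exp (-x)))
      = fun x => ∑ j ∈ range (P.natDegree + 1),
          P.coeff j * (x ^ j * (x ^ α * Real.exp (-x))) := by
    funext x
    rw [Polynomial.eval_eq_sum_range, Finset.sum_mul]
    exact Finset.sum_congr rfl fun j _ => by ring
  rw [e]
  exact integrable_finset_sum _ fun j _ => ((integrable_pow hα j).const_mul _)

lemma II_pow (hα : -1 < α) (j : ℕ) :
    (∫ x in Set.Ioi (0:ℝ), x ^ j * (x ^ α * Real.exp (-x))) = Real.Gamma (j + α + 1) := by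
  have hj : (0:ℝ) ≤ (j:ℝ) := Nat.cast_nonneg j
  have h : (0:ℝ) < (j:ℝ) + α + 1 := by linarith
  rw [Real.Gamma_eq_integral h]
  refine setIntegral_congr_fun measurableSet_Ioi fun x hx => ?_
  have hx0 : (0:ℝ) < x := hx
  have e : ((j:ℝ) + α + 1 - 1) = (j:ℝ) + α := by ring
  simp only [e]
  rw [Real.rpow_add hx0, Real.rpow_natCast]
  ring

lemma II_CXpow (hα : -1 < α) (a : ℝ) (j : ℕ) :
    II α (C a * X ^ j) = a * Real.Gamma (j + α + 1) := by
  unfold II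
  have e : (fun x : ℝ => (C a * X ^ j).eval x * (x ^ α * Real.exp (-x)))
      = fun x => a * (x ^ j * (x ^ α * Real.exp (-x))) := by
    funext x; simp [mul_assoc]
  rw [e, MeasureTheory.integral_const_mul, II_pow hα]

lemma II_sum (hα : -1 < α) {ι : Type*} (s : Finset ι) (f : ι → Polynomial ℝ) :
    II α (∑ j ∈ s, f j) = ∑ j ∈ s, II α (f j) := by
  unfold II
  rw [← MeasureTheory.integral_finset_sum _ fun j _ => integrable_poly hα (f j)]
  refine setIntegral_congr_fun measurableSet_Ioi fun x _ => ?_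
  rw [Polynomial.eval_finset_sum, Finset.sum_mul]

lemma II_sub (hα : -1 < α) (P Q : Polynomial ℝ) : II α (P - Q) = II α P - II α Q := by
  unfold II
  rw [← MeasureTheory.integral_sub (integrable_poly hα P) (integrable_poly hα Q)]
  refine setIntegral_congr_fun measurableSet_Ioi fun x _ => ?_
  rw [Polynomial.eval_sub, sub_mul]


noncomputable def c (α : ℝ) (n j : ℕ) : ℝ :=
  (-1 : ℝ) ^ (n + j) * (n.choose j) * Real.Gamma (n + α + 1) / Real.Gamma (j + α + 1)

noncomputable def M (α : ℝ) (n : ℕ) : Polynomial ℝ :=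
  ∑ j ∈ range (n + 1), C (c α n j) * X ^ j


lemma c_zero_of_lt {n j : ℕ} (h : n < j) : c α n j = 0 := by
  simp [c, Nat.choose_eq_zero_of_lt h]

lemma coeff_M (n j : ℕ) : (M α n).coeff j = c α n j := by
  unfold M
  rw [finset_sum_coeff]
  simp only [coeff_C_mul, coeff_X_pow, mul_ite, mul_one, mul_zero]
  rw [Finset.sum_ite_eq (range (n + 1)) j (fun i => c α n i)]
  by_cases h : j ∈ range (n + 1)
  · simp [h]
  · rw [if_neg h]
    exact (c_zero_of_lt (by simpa using h)).symm

lemma c_self (hα : -1 < α) (n : ℕ) : c α n n = 1 := by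
  have h : (0:ℝ) < (n:ℝ) + α + 1 := by
    have : (0:ℝ) ≤ (n:ℝ) := Nat.cast_nonneg n; linarith
  have hG : Real.Gamma ((n:ℝ) + α + 1) ≠ 0 := ne_of_gt (Real.Gamma_pos_of_pos h)
  unfold c
  rw [← two_mul, pow_mul]
  field_simp
  simp

lemma M_eq (hα : -1 < α) (n : ℕ) :
    M α n = X ^ n + ∑ j ∈ range n, C (c α n j) * X ^ j := by
  unfold M
  rw [Finset.sum_range_succ, c_self hα, map_one, one_mul, add_comm]

lemma degree_lower (n : ℕ) : (∑ j ∈ range n, C (c α n j) * X ^ j).degree < (n : WithBot ℕ) := by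
  rcases Nat.eq_zero_or_pos n with rfl | hn
  · simp
  refine lt_of_le_of_lt (Polynomial.degree_sum_le _ _) ?_
  rw [Finset.sup_lt_iff (by exact_mod_cast WithBot.bot_lt_coe n)]
  intro j hj
  exact lt_of_le_of_lt (degree_C_mul_X_pow_le j _)
    (by exact_mod_cast Nat.lt_of_lt_of_le (Finset.mem_range.mp hj) le_rfl)

lemma monic_M (hα : -1 < α) (n : ℕ) : (M α n).Monic := by
  rw [M_eq hα]
  exact monic_X_pow_add (degree_lower n)

lemma degree_M (hα : -1 < α) (n : ℕ) : (M α n).degree = (n : WithBot ℕ) := by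
  rw [M_eq hα]
  rw [Polynomial.degree_add_eq_left_of_degree_lt (by rw [degree_X_pow]; exact degree_lower n)]
  exact degree_X_pow n

lemma natDegree_M (hα : -1 < α) (n : ℕ) : (M α n).natDegree = n :=
  natDegree_eq_of_degree_eq_some (degree_M hα n)

lemma Gamma_shift (s : ℝ) (hs : 0 < s) (m : ℕ) :
    Real.Gamma (s + m) = Real.Gamma s * ∏ t ∈ range m, (s + t) := by
  induction m with
  | zero => simp
  | succ m ih =>
    have h1 : s + ((m : ℝ) + 1) = (s + m) + 1 := by ring
    have h2 : s + (m:ℝ) ≠ 0 := by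
      have : (0:ℝ) ≤ (m:ℝ) := Nat.cast_nonneg m
      positivity
    push_cast
    rw [h1, Real.Gamma_add_one h2, ih, prod_range_succ]
    push_cast
    ring

lemma natDegree_shift_sub (q : Polynomial ℝ) (n : ℕ) (hq : q.natDegree ≤ n + 1) :
    (q.comp (X + C 1) - q).natDegree ≤ n := by
  rcases eq_or_ne (q.comp (X + C 1)) q with h | h
  · rw [h]; simp
  have hq0 : q ≠ 0 := by rintro rfl; simp at h
  have hXC : (X + C (1:ℝ)).natDegree = 1 := natDegree_X_add_C 1
  have h1 : (q.comp (X + C 1)).natDegree = q.natDegree := by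
    rw [natDegree_comp, hXC, mul_one]
  have h2 : (q.comp (X + C 1)).leadingCoeff = q.leadingCoeff := by
    rw [leadingCoeff_comp (by rw [hXC]; norm_num)]
    simp only [show X + (1:ℝ[X]) = X + C 1 by simp, leadingCoeff_X_add_C, one_pow, mul_one]
  have hc0 : q.comp (X + C 1) ≠ 0 := by
    intro hh
    apply hq0
    rw [← leadingCoeff_eq_zero, ← h2, hh, leadingCoeff_zero]
  have hdeg : (q.comp (X + C 1)).degree = q.degree := by
    rw [degree_eq_natDegree hc0, degree_eq_natDegree hq0, h1]
  have hlt := Polynomial.degree_sub_lt hdeg hc0 h2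
  have hrne : q.comp (X + C 1) - q ≠ 0 := sub_ne_zero.mpr h
  have := Polynomial.natDegree_lt_natDegree hrne (hlt.trans_le (le_of_eq hdeg))
  omega


lemma fd : ∀ (N : ℕ) (q : Polynomial ℝ), q.natDegree < N → ∀ x : ℝ,
    ∑ j ∈ range (N + 1), (-1:ℝ) ^ j * (N.choose j) * q.eval (x + j) = 0 := by
  intro N
  induction N with
  | zero => intro q hq; omega
  | succ N ih =>
    intro q hq x
    rcases Nat.eq_zero_or_pos N with rfl | hN
    · -- q is constant
      have hq0 : q.natDegree ≤ 0 := by omega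
      rw [Polynomial.eq_C_of_natDegree_le_zero hq0]
      simp [Finset.sum_range_succ]
    · set r : Polynomial ℝ := q.comp (X + C 1) - q with hr
      have hrev : ∀ y : ℝ, r.eval y = q.eval (y + 1) - q.eval y := by
        intro y; simp [hr, Polynomial.eval_comp]
      have hrd : r.natDegree < N := by
        have h5 := natDegree_shift_sub q (N - 1) (by omega)
        rw [← hr] at h5
        omega
      have ihr := ih r hrd x
      set f : ℕ → ℝ := fun i => (-1:ℝ) ^ i * ((N + 1).choose i) * q.eval (x + i) with hf
      set g : ℕ → ℝ := fun i => (-1:ℝ) ^ i * (N.choose i) * q.eval (x + i) with hg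
      have step1 : ∑ j ∈ range (N + 2), f j = (∑ i ∈ range (N + 1), f (i + 1)) + f 0 :=
        Finset.sum_range_succ' f (N + 1)
      have step2 : ∀ i, f (i + 1) =
          -((-1:ℝ) ^ i * (N.choose i) * r.eval (x + i)) + (g (i + 1) - g i) := by
        intro i
        have hc : ((N + 1).choose (i + 1) : ℝ) = (N.choose i : ℝ) + (N.choose (i + 1) : ℝ) := by
          exact_mod_cast congrArg Nat.cast (Nat.choose_succ_succ N i)
        rw [hf, hg, hrev]
        simp only [hc]
        push_cast
        ring
      have step3 : ∑ i ∈ range (N + 1), (g (i + 1) - g i) = g (N + 1) - g 0 :=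
        Finset.sum_range_sub g (N + 1)
      have hgN : g (N + 1) = 0 := by simp [hg, Nat.choose_succ_self]
      have hg0 : g 0 = q.eval x := by simp [hg]
      have hf0 : f 0 = q.eval x := by simp [hf]
      calc ∑ j ∈ range (N + 2), f j
          = (∑ i ∈ range (N + 1), f (i + 1)) + f 0 := step1
        _ = (∑ i ∈ range (N + 1),
              (-((-1:ℝ) ^ i * (N.choose i) * r.eval (x + i)) + (g (i + 1) - g i))) + f 0 := by
            rw [Finset.sum_congr rfl fun i _ => step2 i]
        _ = -(∑ i ∈ range (N + 1), (-1:ℝ) ^ i * (N.choose i) * r.eval (x + i))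
              + (∑ i ∈ range (N + 1), (g (i + 1) - g i)) + f 0 := by
            rw [Finset.sum_add_distrib, Finset.sum_neg_distrib]
        _ = 0 := by rw [ihr, step3, hgN, hg0, hf0]; ring



lemma II_M_pow (hα : -1 < α) (n m : ℕ) (hm : m < n) : II α (M α n * X ^ m) = 0 := by
  have e : M α n * X ^ m = ∑ j ∈ range (n + 1), C (c α n j) * X ^ (j + m) := by
    unfold M
    rw [Finset.sum_mul]
    exact Finset.sum_congr rfl fun j _ => by rw [mul_assoc, ← pow_add]
  rw [e, II_sum hα]
  have e2 : ∀ j ∈ range (n + 1),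
      II α (C (c α n j) * X ^ (j + m)) = c α n j * Real.Gamma ((j : ℝ) + m + α + 1) := by
    intro j _
    rw [II_CXpow hα]
    congr 1
    push_cast
    ring
  rw [Finset.sum_congr rfl e2]
  -- set up polynomial qm
  set qm : Polynomial ℝ := ∏ t ∈ range m, (X + C ((α + 1) + t)) with hqm
  have hqmdeg : qm.natDegree < n := by
    have : qm.natDegree = m := by
      rw [hqm, Polynomial.natDegree_prod]
      · simp only [natDegree_X_add_C]
        simp
      · intro t _
        exact X_add_C_ne_zero _
    omega
  have hqmeval : ∀ j : ℕ, qm.eval (0 + (j:ℝ)) = ∏ t ∈ range m, ((j:ℝ) + α + 1 + t) := by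
    intro j
    rw [hqm, Polynomial.eval_prod]
    exact Finset.prod_congr rfl fun t _ => by simp; ring
  have key := fd n qm hqmdeg 0
  have e3 : ∀ j ∈ range (n + 1),
      c α n j * Real.Gamma ((j : ℝ) + m + α + 1)
        = (Real.Gamma ((n:ℝ) + α + 1) * (-1:ℝ) ^ n)
          * ((-1:ℝ) ^ j * (n.choose j) * qm.eval (0 + (j:ℝ))) := by
    intro j _
    have hj1 : (0:ℝ) < (j:ℝ) + α + 1 := by
      have : (0:ℝ) ≤ (j:ℝ) := Nat.cast_nonneg j; linarith
    have hG : Real.Gamma ((j:ℝ) + α + 1) ≠ 0 := ne_of_gt (Real.Gamma_pos_of_pos hj1)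
    have hsplit : Real.Gamma ((j:ℝ) + m + α + 1)
        = Real.Gamma ((j:ℝ) + α + 1) * ∏ t ∈ range m, ((j:ℝ) + α + 1 + t) := by
      have := Gamma_shift ((j:ℝ) + α + 1) hj1 m
      rw [← this]
      congr 1
      ring
    rw [hsplit, hqmeval j]
    unfold c
    rw [pow_add]
    field_simp
  rw [Finset.sum_congr rfl e3, ← Finset.mul_sum, key, mul_zero]

lemma II_M_orth (hα : -1 < α) (n : ℕ) (p : Polynomial ℝ) (hp : p.degree < (n : WithBot ℕ)) :
    II α (M α n * p) = 0 := by
  rcases eq_or_ne p 0 with rfl | hp0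
  · simpa using (II_sum hα (∅ : Finset ℕ) (fun _ => 0)).symm ▸ (by simp [II])
  have hnd : p.natDegree < n := (Polynomial.natDegree_lt_iff_degree_lt hp0).mpr hp
  have e : M α n * p
      = ∑ m ∈ range (p.natDegree + 1), (C (p.coeff m) * (M α n * X ^ m)) := by
    conv_lhs => rw [Polynomial.as_sum_range' p (p.natDegree + 1) (Nat.lt_succ_self _)]
    rw [Finset.mul_sum]
    refine Finset.sum_congr rfl fun m _ => ?_
    rw [← Polynomial.C_mul_X_pow_eq_monomial]
    ring
  rw [e, II_sum hα]
  refine Finset.sum_eq_zero fun m hm => ?_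
  have hmn : m < n := lt_of_le_of_lt (Nat.lt_succ_iff.mp (Finset.mem_range.mp hm)) hnd
  have : II α (C (p.coeff m) * (M α n * X ^ m)) = p.coeff m * II α (M α n * X ^ m) := by
    unfold II
    rw [← MeasureTheory.integral_const_mul]
    refine setIntegral_congr_fun measurableSet_Ioi fun x _ => ?_
    simp [mul_assoc]
  rw [this, II_M_pow hα n m hmn, mul_zero]



lemma L_eq_M (hα : -1 < α) (L : ℕ → Polynomial ℝ)
    (hLmonic : ∀ n : ℕ, (L n).Monic ∧ (L n).natDegree = n)
    (hLorth : ∀ n : ℕ, ∀ p : Polynomial ℝ, p.degree < (n : WithBot ℕ) →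
      ∫ x in Set.Ioi (0:ℝ), (L n).eval x * p.eval x * x ^ α * Real.exp (-x) = 0)
    (n : ℕ) : L n = M α n := by
  by_contra hne
  set P : Polynomial ℝ := L n - M α n with hP
  have hP0 : P ≠ 0 := sub_ne_zero.mpr hne
  have hLn0 : L n ≠ 0 := (hLmonic n).1.ne_zero
  have hdegL : (L n).degree = (n : WithBot ℕ) := by
    rw [degree_eq_natDegree hLn0, (hLmonic n).2]
  have hdlt : P.degree < (n : WithBot ℕ) := by
    have := Polynomial.degree_sub_lt (hdegL.trans (degree_M hα n).symm) hLn0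
      (by rw [(hLmonic n).1.leadingCoeff, (monic_M hα n).leadingCoeff])
    rwa [hdegL] at this
  have h1 : II α (L n * P) = 0 := by
    have horth := hLorth n P hdlt
    have e : II α (L n * P)
        = ∫ x in Set.Ioi (0:ℝ), (L n).eval x * P.eval x * x ^ α * Real.exp (-x) := by
      unfold II
      refine setIntegral_congr_fun measurableSet_Ioi fun x _ => ?_
      rw [Polynomial.eval_mul]
      ring
    rw [e]
    exact horth
  have h2 : II α (M α n * P) = 0 := II_M_orth hα n P hdlt
  have h3 : II α (P * P) = 0 := by
    have e : P * P = L n * P - M α n * P := by rw [hP]; ring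
    rw [e, II_sub hα, h1, h2, sub_zero]
  -- positivity contradiction
  set f : ℝ → ℝ := fun x => (P * P).eval x * (x ^ α * Real.exp (-x)) with hfdef
  have hint : Integrable f (volume.restrict (Set.Ioi 0)) := integrable_poly hα (P * P)
  have hnn : 0 ≤ᵐ[volume.restrict (Set.Ioi 0)] f := by
    filter_upwards [ae_restrict_mem measurableSet_Ioi] with x hx
    have hx0 : (0:ℝ) < x := hx
    have e : f x = (P.eval x) ^ 2 * (x ^ α * Real.exp (-x)) := by
      simp [hfdef, Polynomial.eval_mul, sq]
    rw [e]
    exact mul_nonneg (sq_nonneg _)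
      (mul_nonneg (Real.rpow_nonneg hx0.le _) (Real.exp_pos _).le)
  have hzero : f =ᵐ[volume.restrict (Set.Ioi 0)] 0 :=
    (integral_eq_zero_iff_of_nonneg_ae hnn hint).mp h3
  have hnull : volume.restrict (Set.Ioi 0) {x | f x ≠ 0} = 0 := by
    have := hzero
    rw [Filter.EventuallyEq, ae_iff] at this
    simpa using this
  have hroots : Set.Finite {x | P.IsRoot x} := P.finite_setOf_isRoot hP0
  have hsub : Set.Ioi (1:ℝ) \ {x | P.IsRoot x} ⊆ {x | f x ≠ 0} := by
    rintro x ⟨hx1, hxr⟩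
    have hx0 : (0:ℝ) < x := lt_trans one_pos hx1
    have hpe : P.eval x ≠ 0 := hxr
    have : f x = (P.eval x) ^ 2 * (x ^ α * Real.exp (-x)) := by
      simp [hfdef, Polynomial.eval_mul, sq]
    intro hfx
    rw [this] at hfx
    have h2pos : (0:ℝ) < (P.eval x) ^ 2 :=
      lt_of_le_of_ne (sq_nonneg _) (Ne.symm (pow_ne_zero 2 hpe))
    have hpos : (0:ℝ) < (P.eval x) ^ 2 * (x ^ α * Real.exp (-x)) :=
      mul_pos h2pos (mul_pos (Real.rpow_pos_of_pos hx0 _) (Real.exp_pos _))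
    exact hpos.ne' hfx
  have hmeas : volume.restrict (Set.Ioi 0) (Set.Ioi (1:ℝ) \ {x | P.IsRoot x}) = 0 :=
    measure_mono_null hsub hnull
  rw [Measure.restrict_apply' measurableSet_Ioi] at hmeas
  have hss : (Set.Ioi (1:ℝ) \ {x | P.IsRoot x}) ∩ Set.Ioi 0
      = Set.Ioi (1:ℝ) \ {x | P.IsRoot x} := by
    refine Set.inter_eq_left.mpr ?_
    exact (Set.diff_subset).trans (Set.Ioi_subset_Ioi (by norm_num))
  rw [hss] at hmeas
  have hvol : volume (Set.Ioi (1:ℝ) \ {x | P.IsRoot x}) = volume (Set.Ioi (1:ℝ)) :=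
    measure_diff_null (hroots.measure_zero volume)
  rw [hvol, Real.volume_Ioi] at hmeas
  simp at hmeas



lemma eval0_M (i : ℕ) : (M α i).eval 0 = c α i 0 := by
  rw [← Polynomial.coeff_zero_eq_eval_zero, coeff_M]

lemma deriv_eval0 (i k : ℕ) :
    (derivative^[k] (M α i)).eval 0 = (k.factorial : ℝ) * c α i k := by
  rw [← Polynomial.coeff_zero_eq_eval_zero, Polynomial.coeff_iterate_derivative, zero_add,
    coeff_M, Nat.descFactorial_self, nsmul_eq_mul]

noncomputable def T (α : ℝ) (k i : ℕ) : ℝ :=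
  ((k.factorial : ℝ) * c α i k) * c α i 0 /
    ((i.factorial : ℝ) * Real.Gamma (i + α + 1) / Real.Gamma (α + 1))

lemma hterm (hα : -1 < α) (k i : ℕ) (hki : k ≤ i) :
    T α k i = (-1:ℝ) ^ k *
      (Real.Gamma ((i:ℝ) + α + 1) / (((i - k).factorial : ℝ) * Real.Gamma ((k:ℝ) + α + 1))) := by
  have hGi : (0:ℝ) < Real.Gamma ((i:ℝ) + α + 1) :=
    Real.Gamma_pos_of_pos (by have : (0:ℝ) ≤ (i:ℝ) := Nat.cast_nonneg i; linarith)
  have hGk : (0:ℝ) < Real.Gamma ((k:ℝ) + α + 1) :=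
    Real.Gamma_pos_of_pos (by have : (0:ℝ) ≤ (k:ℝ) := Nat.cast_nonneg k; linarith)
  have hGa : (0:ℝ) < Real.Gamma (α + 1) := Real.Gamma_pos_of_pos (by linarith)
  have hchoose : ((i.choose k : ℝ)) * (k.factorial : ℝ) * (((i - k).factorial : ℝ))
      = (i.factorial : ℝ) := by
    exact_mod_cast congrArg Nat.cast (Nat.choose_mul_factorial_mul_factorial hki)
  have hsign : (-1:ℝ) ^ (i + k) * (-1:ℝ) ^ (i + 0) = (-1:ℝ) ^ k := by
    rw [← pow_add, show i + k + (i + 0) = 2 * i + k by ring, pow_add, pow_mul]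
    norm_num
  have e1 : c α i 0 = (-1:ℝ) ^ (i + 0) * Real.Gamma ((i:ℝ) + α + 1) / Real.Gamma (α + 1) := by
    unfold c
    norm_num
  have e2 : c α i k = (-1:ℝ) ^ (i + k) * (i.choose k : ℝ) * Real.Gamma ((i:ℝ) + α + 1)
      / Real.Gamma ((k:ℝ) + α + 1) := rfl
  unfold T
  rw [e1, e2]
  have hf1 : ((i - k).factorial : ℝ) ≠ 0 := Nat.cast_ne_zero.mpr (Nat.factorial_ne_zero _)
  have hf2 : ((i).factorial : ℝ) ≠ 0 := Nat.cast_ne_zero.mpr (Nat.factorial_ne_zero _)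
  have hf3 : ((k).factorial : ℝ) ≠ 0 := Nat.cast_ne_zero.mpr (Nat.factorial_ne_zero _)
  simp only [Nat.add_zero] at hsign ⊢
  field_simp
  linear_combination ((k.factorial:ℝ) * (i.choose k : ℝ) * ((i-k).factorial : ℝ)) * hsign
    + ((-1:ℝ)^k) * hchoose


lemma sum_T (hα : -1 < α) (k : ℕ) : ∀ n : ℕ, k + 1 ≤ n →
    ∑ i ∈ range n, T α k i
      = (-1:ℝ) ^ k * Real.Gamma (α + n + 1) /
          (((n - (k + 1)).factorial : ℝ) * Real.Gamma (α + k + 2)) := by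
  refine Nat.le_induction ?_ ?_
  · -- base n = k + 1
    rw [Finset.sum_range_succ]
    have h0 : ∑ i ∈ range k, T α k i = 0 := by
      refine Finset.sum_eq_zero fun i hi => ?_
      have : c α i k = 0 := c_zero_of_lt (Finset.mem_range.mp hi)
      simp [T, this]
    rw [h0, zero_add, hterm hα k k le_rfl]
    have hGk : (0:ℝ) < Real.Gamma ((k:ℝ) + α + 1) :=
      Real.Gamma_pos_of_pos (by have : (0:ℝ) ≤ (k:ℝ) := Nat.cast_nonneg k; linarith)
    have hGk2 : (0:ℝ) < Real.Gamma (α + (k:ℝ) + 2) :=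
      Real.Gamma_pos_of_pos (by have : (0:ℝ) ≤ (k:ℝ) := Nat.cast_nonneg k; linarith)
    have h1 : k + 1 - (k + 1) = 0 := by omega
    rw [h1]
    push_cast
    rw [show α + ((k:ℝ) + 1) + 1 = α + (k:ℝ) + 2 by ring]
    field_simp
    simp
  · -- step
    intro n hn ih
    rw [Finset.sum_range_succ, ih, hterm hα k n (by omega)]
    have h1 : n + 1 - (k + 1) = n - k := by omega
    have h2 : n - k = (n - (k + 1)) + 1 := by omega
    rw [h1, h2, Nat.factorial_succ]
    have hcast : ((n - (k + 1) : ℕ) : ℝ) = (n:ℝ) - (k:ℝ) - 1 := by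
      rw [Nat.cast_sub (by omega)]
      push_cast
      ring
    have harg : Real.Gamma ((n:ℝ) + α + 1) = Real.Gamma (α + (n:ℝ) + 1) := by
      congr 1; ring
    have hG2 : Real.Gamma (α + ((n:ℝ) + 1) + 1) = (α + n + 1) * Real.Gamma (α + (n:ℝ) + 1) := by
      rw [show α + ((n:ℝ) + 1) + 1 = (α + (n:ℝ) + 1) + 1 by ring]
      refine Real.Gamma_add_one (ne_of_gt ?_)
      have : (0:ℝ) ≤ (n:ℝ) := Nat.cast_nonneg n
      linarith
    have hGk2 : Real.Gamma (α + (k:ℝ) + 2) = (α + k + 1) * Real.Gamma (α + (k:ℝ) + 1) := by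
      rw [show α + (k:ℝ) + 2 = (α + (k:ℝ) + 1) + 1 by ring]
      refine Real.Gamma_add_one (ne_of_gt ?_)
      have : (0:ℝ) ≤ (k:ℝ) := Nat.cast_nonneg k
      linarith
    have hargk : Real.Gamma ((k:ℝ) + α + 1) = Real.Gamma (α + (k:ℝ) + 1) := by
      congr 1; ring
    push_cast
    rw [harg, hargk, hG2, hGk2, hcast,
      show (n:ℝ) - (k:ℝ) - 1 + 1 = (n:ℝ) - (k:ℝ) from by ring]
    have hGn : (0:ℝ) < Real.Gamma (α + (n:ℝ) + 1) :=
      Real.Gamma_pos_of_pos (by have : (0:ℝ) ≤ (n:ℝ) := Nat.cast_nonneg n; linarith)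
    have hGk : (0:ℝ) < Real.Gamma (α + (k:ℝ) + 1) :=
      Real.Gamma_pos_of_pos (by have : (0:ℝ) ≤ (k:ℝ) := Nat.cast_nonneg k; linarith)
    have hD : ((n - (k + 1)).factorial : ℝ) ≠ 0 := Nat.cast_ne_zero.mpr (Nat.factorial_ne_zero _)
    have hnk : (0:ℝ) < (n:ℝ) - (k:ℝ) := by
      have : (k:ℝ) < (n:ℝ) := by exact_mod_cast (by omega : k < n)
      linarith
    have hak : (0:ℝ) < α + (k:ℝ) + 1 := by
      have : (0:ℝ) ≤ (k:ℝ) := Nat.cast_nonneg k; linarith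
    field_simp
    ring

end LagAux

open LagAux in
/-- Explicit value of the differentiated Laguerre kernel `K_{n-1}^{(k,0)}(0,0)`. -/
theorem laguerre_kernel_derivative_at_zero
    (α : ℝ) (hα : -1 < α)
    (L : ℕ → Polynomial ℝ)
    (hLmonic : ∀ n : ℕ, (L n).Monic ∧ (L n).natDegree = n)
    (hLorth : ∀ n : ℕ, ∀ p : Polynomial ℝ, p.degree < (n : WithBot ℕ) →
      ∫ x in Set.Ioi (0:ℝ), (L n).eval x * p.eval x * x ^ α * Real.exp (-x) = 0) :
    ∀ n : ℕ, 1 ≤ n → ∀ k : ℕ, k ≤ n - 1 →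
      ∑ i ∈ Finset.range n,
          (Polynomial.derivative^[k] (L i)).eval 0 * (L i).eval 0 /
            ((i.factorial : ℝ) * Real.Gamma (i + α + 1) / Real.Gamma (α + 1)) =
        (-1) ^ k * Real.Gamma (α + n + 1) /
          (((n - (k + 1)).factorial : ℝ) * Real.Gamma (α + k + 2)) := by
  intro n hn k hk
  have hkn : k + 1 ≤ n := by omega
  have hLM : ∀ m : ℕ, L m = LagAux.M α m := fun m => LagAux.L_eq_M hα L hLmonic hLorth m
  have e : ∀ i ∈ Finset.range n,
      (Polynomial.derivative^[k] (L i)).eval 0 * (L i).eval 0 /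
        ((i.factorial : ℝ) * Real.Gamma (i + α + 1) / Real.Gamma (α + 1)) = LagAux.T α k i := by
    intro i _
    rw [hLM i, LagAux.deriv_eval0, LagAux.eval0_M]
    rfl
  rw [Finset.sum_congr rfl e]
  exact LagAux.sum_T hα k n hkn
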